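/- Let M be a normalized log-convex sequence and define h_M(t) = inf_{j ≥ 0} t^j M_j for t ≥ 0. Then for every j, M_j = sup_{t > 0} t^{-j} h_M(t). -/
import Mathlib


/-- For a normalized log-convex sequence `M`, with `h_M t = inf_j t^j * M j`,
one recovers `M j = sup_{t > 0} t^(-j) * h_M t`. -/
theorem stmt_1 (M : ℕ → ℝ) (hpos : ∀ j, 0 < M j) (h0 : M 0 = 1)
    (hmono : Monotone M) (hratio : Monotone fun j => M (j + 1) / M j)
    (hM : ℝ → ℝ) (hhM : ∀ t : ℝ, 0 ≤ t → hM t = sInf {y : ℝ | ∃ j : ℕ, y = t ^ j * M j}) :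
    ∀ j : ℕ, M j = sSup {y : ℝ | ∃ t : ℝ, 0 < t ∧ y = t ^ (-(j : ℤ)) * hM t} := by
  intro j
  -- basic facts about the set defining hM t
  have hbdd : ∀ t : ℝ, BddBelow {y : ℝ | ∃ k : ℕ, y = t ^ k * M k} ∨ True := fun _ => Or.inr trivial
  have hlow : ∀ t : ℝ, 0 ≤ t → (0:ℝ) ∈ lowerBounds {y : ℝ | ∃ k : ℕ, y = t ^ k * M k} := by
    rintro t ht y ⟨k, rfl⟩
    exact mul_nonneg (pow_nonneg ht k) (hpos k).le
  -- upper bound: every element of the sup set is ≤ M j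
  have hub : ∀ y ∈ {y : ℝ | ∃ t : ℝ, 0 < t ∧ y = t ^ (-(j : ℤ)) * hM t}, y ≤ M j := by
    rintro y ⟨t, ht, rfl⟩
    have h1 : hM t ≤ t ^ j * M j := by
      rw [hhM t ht.le]
      exact csInf_le ⟨0, hlow t ht.le⟩ ⟨j, rfl⟩
    have h2 : (0:ℝ) < t ^ (-(j : ℤ)) := zpow_pos ht _
    calc t ^ (-(j : ℤ)) * hM t ≤ t ^ (-(j : ℤ)) * (t ^ j * M j) := by
          exact mul_le_mul_of_nonneg_left h1 h2.le
      _ = M j := by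
          rw [zpow_neg, zpow_natCast, ← mul_assoc,
            inv_mul_cancel₀ (pow_ne_zero _ ht.ne')]
          ring
  -- the special point t₀
  set t₀ : ℝ := M j / M (j + 1) with ht₀def
  have ht₀pos : 0 < t₀ := div_pos (hpos j) (hpos (j + 1))
  set g : ℕ → ℝ := fun k => t₀ ^ k * M k with hg
  have step1 : ∀ k, k ≤ j → g (k + 1) ≤ g k := by
    intro k hk
    have hr : M (k + 1) / M k ≤ M (j + 1) / M j := hratio hk
    have := (div_le_div_iff₀ (hpos k) (hpos j)).mp hr
    have ht₀ : t₀ * M (k + 1) ≤ M k := by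
      rw [ht₀def, div_mul_eq_mul_div, div_le_iff₀ (hpos (j+1))]
      nlinarith
    simp only [hg, pow_succ]
    nlinarith [pow_pos ht₀pos k]
  have step2 : ∀ k, j ≤ k → g k ≤ g (k + 1) := by
    intro k hk
    have hr : M (j + 1) / M j ≤ M (k + 1) / M k := hratio hk
    have := (div_le_div_iff₀ (hpos j) (hpos k)).mp hr
    have ht₀ : M k ≤ t₀ * M (k + 1) := by
      rw [ht₀def, div_mul_eq_mul_div, le_div_iff₀ (hpos (j+1))]
      nlinarith
    simp only [hg, pow_succ]
    nlinarith [pow_pos ht₀pos k]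
  have key : ∀ k, g j ≤ g k := by
    intro k
    rcases le_or_gt k j with h | h
    · -- downward
      have down : ∀ n, ∀ m, m + n ≤ j → g (m + n) ≤ g m := by
        intro n
        induction n with
        | zero => intro m _; simp
        | succ n ih =>
          intro m hm
          calc g (m + (n + 1)) = g (m + n + 1) := by ring_nf
            _ ≤ g (m + n) := step1 _ (by omega)
            _ ≤ g m := ih m (by omega)
      have := down (j - k) k (by omega)
      rwa [Nat.add_sub_cancel' h] at this
    · -- upward
      have up : ∀ m, j ≤ m → g j ≤ g m := by
        intro m hm
        induction m, hm using Nat.le_induction with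
        | base => exact le_rfl
        | succ m hm ih => exact ih.trans (step2 m hm)
      exact up k h.le
  have hval : hM t₀ = g j := by
    rw [hhM t₀ ht₀pos.le]
    apply le_antisymm
    · exact csInf_le ⟨0, hlow t₀ ht₀pos.le⟩ ⟨j, rfl⟩
    · exact le_csInf ⟨_, ⟨0, rfl⟩⟩ (by rintro y ⟨k, rfl⟩; exact key k)
  have hmem : M j ∈ {y : ℝ | ∃ t : ℝ, 0 < t ∧ y = t ^ (-(j : ℤ)) * hM t} := by
    refine ⟨t₀, ht₀pos, ?_⟩
    rw [hval, hg]
    rw [zpow_neg, zpow_natCast, ← mul_assoc,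
      inv_mul_cancel₀ (pow_ne_zero _ ht₀pos.ne')]
    ring
  exact le_antisymm (le_csSup ⟨M j, hub⟩ hmem) (csSup_le ⟨M j, hmem⟩ hub)
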